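/- Let R, θ ∈ C²([−1,1]) satisfy R'' − R|θ'|² + R − R³ = 0 and R²θ'(x) = A∫_{−1}^x V R² with A > 0 and V odd, nondecreasing, not a.e. zero, R even, R ≥ 0, R' ≤ 0 on (−1,0), R' ≥ 0 on (0,1), R'(±1) = θ'(±1) = 0. If R(x₀) = 0 and R'(x₀) = 0 at some x₀ ∈ [−1,1], then R ≡ 0 on [−1,1]. -/

import Mathlib

open MeasureTheory

/-- If the modulus `R` of a symmetric steady state (satisfying
`R'' - R|θ'|² + R - R³ = 0` and `R²θ' = A∫_{-1}^{x} V R²`) vanishes together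
with its derivative at some point `x₀ ∈ [-1,1]`, then `R ≡ 0` on `[-1,1]`
(ODE uniqueness). -/
theorem vanishing_by_ode_uniqueness
    (A : ℝ) (hA : 0 < A) (V R θ : ℝ → ℝ)
    (hVmeas : Measurable V)
    (hVbd : ∃ M, ∀ x ∈ Set.Icc (-1 : ℝ) 1, |V x| ≤ M)
    (hVodd : ∀ x ∈ Set.Icc (-1 : ℝ) 1, V (-x) = -V x)
    (hVmono : ∀ x₁ ∈ Set.Icc (-1 : ℝ) 1, ∀ x₂ ∈ Set.Icc (-1 : ℝ) 1,
      x₁ < x₂ → V x₁ ≤ V x₂)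
    (hVne : ¬ (∀ᵐ x ∂(volume.restrict (Set.Icc (-1 : ℝ) 1)), V x = 0))
    (hR : ContDiff ℝ 2 R) (hθ : ContDiff ℝ 2 θ)
    (hRnonneg : ∀ x ∈ Set.Icc (-1 : ℝ) 1, 0 ≤ R x)
    (hReven : ∀ x ∈ Set.Icc (-1 : ℝ) 1, R (-x) = R x)
    (hRdec : ∀ x ∈ Set.Ioo (-1 : ℝ) 0, deriv R x ≤ 0)
    (hRinc : ∀ x ∈ Set.Ioo (0 : ℝ) 1, 0 ≤ deriv R x)
    (hbcR : deriv R (-1) = 0 ∧ deriv R 1 = 0)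
    (hbcθ : deriv θ (-1) = 0 ∧ deriv θ 1 = 0)
    (heqR : ∀ x ∈ Set.Icc (-1 : ℝ) 1,
      deriv (deriv R) x - R x * (deriv θ x) ^ 2 + R x - (R x) ^ 3 = 0)
    (heqθ : ∀ x ∈ Set.Icc (-1 : ℝ) 1,
      (R x) ^ 2 * deriv θ x = A * ∫ s in (-1 : ℝ)..x, V s * (R s) ^ 2)
    (x₀ : ℝ) (hx₀ : x₀ ∈ Set.Icc (-1 : ℝ) 1)
    (hR0 : R x₀ = 0) (hR'0 : deriv R x₀ = 0) :
    ∀ x ∈ Set.Icc (-1 : ℝ) 1, R x = 0 := by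
  -- Differentiability facts
  have hRd : Differentiable ℝ R := hR.differentiable two_ne_zero
  have hR1 : ContDiff ℝ 1 (deriv R) :=
    (contDiff_succ_iff_deriv.mp (by exact_mod_cast hR)).2.2
  have hR'd : Differentiable ℝ (deriv R) := hR1.differentiable one_ne_zero
  have hRc : Continuous R := hRd.continuous
  have hR'c : Continuous (deriv R) := hR'd.continuous
  have hθ'c : Continuous (deriv θ) := hθ.continuous_deriv one_le_two
  -- Bounds for θ' and R on the interval
  obtain ⟨C, hC⟩ := isCompact_Icc.exists_bound_of_continuousOn
    (hθ'c.continuousOn : ContinuousOn (deriv θ) (Set.Icc (-1 : ℝ) 1))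
  obtain ⟨B, hB⟩ := isCompact_Icc.exists_bound_of_continuousOn
    (hRc.continuousOn : ContinuousOn R (Set.Icc (-1 : ℝ) 1))
  have hCnn : 0 ≤ C := le_trans (norm_nonneg _) (hC 0 (by norm_num))
  have hBnn : 0 ≤ B := le_trans (norm_nonneg _) (hB 0 (by norm_num))
  set K : ℝ := C ^ 2 + 1 + B ^ 2 with hKdef
  have hKnn : 0 ≤ K := by positivity
  -- R(0) = 0
  have hmono : MonotoneOn R (Set.Icc (0 : ℝ) 1) := by
    apply monotoneOn_of_deriv_nonneg (convex_Icc 0 1) hRc.continuousOn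
      (hRd.differentiableOn.mono interior_subset)
    intro x hx
    rw [interior_Icc] at hx
    exact hRinc x hx
  have hR00 : R 0 = 0 := by
    rcases le_or_gt 0 x₀ with h | h
    · have := hmono (Set.mem_Icc.mpr ⟨le_refl 0, by linarith [hx₀.2]⟩)
        (Set.mem_Icc.mpr ⟨h, hx₀.2⟩) h
      have h0 := hRnonneg 0 (by norm_num)
      linarith [this.trans_eq hR0]
    · have hx₀' : -x₀ ∈ Set.Icc (0 : ℝ) 1 := by
        constructor <;> [linarith [hx₀.2]; linarith [hx₀.1]]
      have hRe : R (-x₀) = R x₀ := hReven x₀ hx₀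
      have := hmono (Set.mem_Icc.mpr ⟨le_refl 0, by norm_num⟩) hx₀' (by linarith)
      have h0 := hRnonneg 0 (by norm_num)
      rw [hRe, hR0] at this
      linarith
  -- deriv R 0 = 0 : interior minimum
  have hR'00 : deriv R 0 = 0 := by
    have hmin : IsLocalMin R 0 := by
      filter_upwards [Icc_mem_nhds (by norm_num : (-1 : ℝ) < 0) (by norm_num : (0:ℝ) < 1)]
        with y hy
      rw [hR00]; exact hRnonneg y hy
    exact hmin.deriv_eq_zero
  -- the energy function
  set f : ℝ → ℝ := fun x => R x ^ 2 + deriv R x ^ 2 with hfdef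
  have hfnn : ∀ x, 0 ≤ f x := fun x => by positivity
  set f' : ℝ → ℝ := fun x =>
    2 * R x * deriv R x + 2 * deriv R x * deriv (deriv R) x with hf'def
  have hfderiv : ∀ x, HasDerivAt f (f' x) x := by
    intro x
    have h1 : HasDerivAt (fun y => R y ^ 2) (2 * R x * deriv R x) x := by
      have := ((hRd x).hasDerivAt).pow 2
      simpa [Pi.pow_def, mul_comm, mul_assoc, mul_left_comm] using this
    have h2 : HasDerivAt (fun y => deriv R y ^ 2)
        (2 * deriv R x * deriv (deriv R) x) x := by
      have := ((hR'd x).hasDerivAt).pow 2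
      simpa [Pi.pow_def, mul_comm, mul_assoc, mul_left_comm] using this
    simpa [Pi.add_def, hfdef, hf'def] using h1.add h2
  -- the second derivative bound
  have hbound : ∀ x ∈ Set.Icc (-1 : ℝ) 1, |deriv (deriv R) x| ≤ K * |R x| := by
    intro x hx
    have h1 : deriv (deriv R) x = R x * (deriv θ x) ^ 2 - R x + R x ^ 3 := by
      have := heqR x hx; linarith
    have h2 : |deriv θ x| ≤ C := hC x hx
    have h3 : |R x| ≤ B := hB x hx
    rw [h1]
    have : |R x * (deriv θ x) ^ 2 - R x + R x ^ 3|
        ≤ |R x| * (deriv θ x) ^ 2 + |R x| + |R x| ^ 3 := by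
      calc |R x * (deriv θ x) ^ 2 - R x + R x ^ 3|
          ≤ |R x * (deriv θ x) ^ 2 - R x| + |R x ^ 3| := abs_add_le _ _
        _ ≤ |R x * (deriv θ x) ^ 2| + |R x| + |R x ^ 3| := by
            linarith [abs_sub (R x * (deriv θ x) ^ 2) (R x)]
        _ = |R x| * (deriv θ x) ^ 2 + |R x| + |R x| ^ 3 := by
            rw [abs_mul, abs_pow, abs_pow, sq_abs]
    refine this.trans ?_
    have h4 : (deriv θ x) ^ 2 ≤ C ^ 2 := by
      rw [← sq_abs]; exact pow_le_pow_left₀ (abs_nonneg _) h2 2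
    have h5 : |R x| ^ 3 ≤ B ^ 2 * |R x| := by
      have : |R x| ^ 3 = |R x| ^ 2 * |R x| := by ring
      rw [this]
      gcongr
    have h6 : |R x| * (deriv θ x) ^ 2 ≤ C ^ 2 * |R x| := by
      rw [mul_comm]; gcongr
    nlinarith [abs_nonneg (R x)]
  -- Gronwall bound on [0,1]
  have hgron : ∀ x ∈ Set.Icc (0 : ℝ) 1, f x = 0 := by
    intro x hx
    have key := norm_le_gronwallBound_of_norm_deriv_right_le
      (f := f) (f' := f') (δ := 0) (K := 1 + K) (ε := 0) (a := 0) (b := 1)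
      (fun y _ => ((hfderiv y).continuousAt).continuousWithinAt)
      (fun y _ => (hfderiv y).hasDerivWithinAt)
      (by simp [hfdef, hR00, hR'00])
      ?_ x hx
    · rw [gronwallBound_ε0_δ0] at key
      have := hfnn x
      have : |f x| ≤ 0 := by simpa [Real.norm_eq_abs] using key
      have := abs_nonneg (f x)
      have hf0 : |f x| = 0 := le_antisymm ‹|f x| ≤ 0› ‹0 ≤ |f x|›
      rwa [abs_eq_zero] at hf0
    · intro y hy
      have hyI : y ∈ Set.Icc (-1 : ℝ) 1 := ⟨by linarith [hy.1], le_of_lt hy.2⟩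
      have hb := hbound y hyI
      simp only [Real.norm_eq_abs, hf'def, hfdef]
      have habs : |2 * R y * deriv R y + 2 * deriv R y * deriv (deriv R) y|
          ≤ 2 * |R y| * |deriv R y| + 2 * |deriv R y| * (K * |R y|) := by
        calc |2 * R y * deriv R y + 2 * deriv R y * deriv (deriv R) y|
            ≤ |2 * R y * deriv R y| + |2 * deriv R y * deriv (deriv R) y| := abs_add_le _ _
          _ ≤ 2 * |R y| * |deriv R y| + 2 * |deriv R y| * (K * |R y|) := by
              rw [abs_mul, abs_mul, abs_mul, abs_mul]
              simp only [abs_two]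
              gcongr
      refine habs.trans ?_
      have h2ab : 2 * |R y| * |deriv R y| ≤ R y ^ 2 + deriv R y ^ 2 := by
        nlinarith [sq_abs (R y), sq_abs (deriv R y), sq_nonneg (|R y| - |deriv R y|)]
      have habsf : |R y ^ 2 + deriv R y ^ 2| = R y ^ 2 + deriv R y ^ 2 :=
        abs_of_nonneg (by positivity)
      rw [habsf]
      nlinarith [sq_abs (R y), sq_abs (deriv R y), sq_nonneg (|R y| - |deriv R y|), hKnn]
  -- conclude
  have hpos : ∀ x ∈ Set.Icc (0 : ℝ) 1, R x = 0 := by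
    intro x hx
    have h := hgron x hx
    simp only [hfdef] at h
    have h2 : R x ^ 2 = 0 := by nlinarith [sq_nonneg (R x), sq_nonneg (deriv R x)]
    exact pow_eq_zero_iff two_ne_zero |>.mp h2
  intro x hx
  rcases le_or_gt 0 x with h | h
  · exact hpos x ⟨h, hx.2⟩
  · have := hReven x hx
    rw [← this]
    exact hpos (-x) ⟨by linarith, by linarith [hx.1]⟩
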